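/- For every integer n ≥ 2, the Riemann zeta function satisfies ζ(n) = (2^n/(2^n - 1)) · Σ_{k=0}^∞ (1/2)_k^n / ((3/2)_k^n) · 1/k! , i.e. ζ(n) equals (2^n/(2^n-1)) times the generalized hypergeometric function _{n+1}F_n with numerator parameters (1, 1/2, ..., 1/2) and denominator parameters (3/2, ..., 3/2) at argument 1. -/

import Mathlib

open scoped BigOperators

/-- Pochhammer symbol `(a)_k = Γ(a+k)/Γ(a)`. -/
noncomputable def poch (a : ℝ) (k : ℕ) : ℝ := Real.Gamma (a + k) / Real.Gamma a

lemma poch_one (k : ℕ) : poch 1 k = (Nat.factorial k : ℝ) := by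
  simp [poch, Real.Gamma_one, add_comm (1:ℝ) (k:ℝ), Real.Gamma_nat_eq_factorial]

lemma poch_half_pos (k : ℕ) : 0 < poch (1/2) k := by
  have h1 : (0:ℝ) < Real.Gamma (1/2 + k) := Real.Gamma_pos_of_pos (by positivity)
  have h2 : (0:ℝ) < Real.Gamma (1/2) := Real.Gamma_pos_of_pos (by norm_num)
  exact div_pos h1 h2

lemma poch_three_half (k : ℕ) : poch (3/2) k = (2 * k + 1) * poch (1/2) k := by
  unfold poch
  have h1 : (3:ℝ)/2 + k = (1/2 + k) + 1 := by ring
  have h2 : (3:ℝ)/2 = (1/2) + 1 := by norm_num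
  rw [h1, h2, Real.Gamma_add_one (by positivity), Real.Gamma_add_one (by norm_num)]
  have hg : Real.Gamma ((1:ℝ)/2) ≠ 0 := (Real.Gamma_pos_of_pos (by norm_num)).ne'
  field_simp
  ring

/-- For every integer `n ≥ 2`, `ζ(n) = (2^n/(2^n-1)) · ₙ₊₁Fₙ(1, 1/2,...,1/2; 3/2,...,3/2; 1)`. -/
theorem zeta_eq_hypergeometric_half (n : ℕ) (hn : 2 ≤ n) :
    (∑' m : ℕ, 1 / ((m : ℝ) + 1) ^ n) =
      ((2 : ℝ) ^ n / (2 ^ n - 1)) *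
        ∑' k : ℕ, (poch 1 k * poch (1 / 2) k ^ n) /
          (poch (3 / 2) k ^ n * (Nat.factorial k : ℝ)) := by
  -- the hypergeometric term equals 1/(2k+1)^n
  have hterm : ∀ k : ℕ, (poch 1 k * poch (1 / 2) k ^ n) /
      (poch (3 / 2) k ^ n * (Nat.factorial k : ℝ)) = 1 / (2 * (k:ℝ) + 1) ^ n := by
    intro k
    rw [poch_one, poch_three_half, mul_pow]
    have hp : poch (1/2) k ≠ 0 := (poch_half_pos k).ne'
    have hf : (Nat.factorial k : ℝ) ≠ 0 := Nat.cast_ne_zero.mpr k.factorial_ne_zero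
    have ho : (2 * (k:ℝ) + 1) ≠ 0 := by positivity
    field_simp
  set f : ℕ → ℝ := fun m => 1 / ((m : ℝ) + 1) ^ n with hf
  have hS : Summable f := by
    have := Real.summable_one_div_nat_pow.mpr (by omega : 1 < n)
    have h2 := this.comp_injective (add_right_injective 1)
    refine h2.congr fun m => ?_
    simp only [Function.comp_apply, hf]
    push_cast
    rw [add_comm]
  have he : Summable fun k => f (2 * k) := hS.comp_injective fun a b h => by omega
  have ho : Summable fun k => f (2 * k + 1) := hS.comp_injective fun a b h => by omega
  have hsplit := tsum_even_add_odd he ho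
  -- even-index sum is 2^{-n} times the whole sum
  have heven : (∑' k, f (2 * k + 1)) = (1 / 2 ^ n) * ∑' m, f m := by
    rw [← tsum_mul_left]
    congr 1
    funext k
    have : ((2 * k + 1 : ℕ) : ℝ) + 1 = 2 * ((k:ℝ) + 1) := by push_cast; ring
    simp only [hf, this, mul_pow, one_div, mul_inv]
  have hodd : (∑' k, f (2 * k)) = ∑' k : ℕ, (poch 1 k * poch (1 / 2) k ^ n) /
      (poch (3 / 2) k ^ n * (Nat.factorial k : ℝ)) := by
    congr 1
    funext k
    rw [hterm k]
    simp only [hf]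
    push_cast
    ring_nf
  rw [← hodd]
  have h2n : (2:ℝ) ^ n - 1 ≠ 0 := by
    have : (1:ℝ) < 2 ^ n := one_lt_pow₀ (by norm_num) (by omega)
    linarith
  have h2n' : (2:ℝ) ^ n ≠ 0 := by positivity
  rw [heven] at hsplit
  have hOeq : (∑' k, f (2 * k)) = (∑' m, f m) - 1 / 2 ^ n * (∑' m, f m) := by
    linarith [hsplit]
  rw [hOeq]
  field_simp
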